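/- Let F and G be cumulative distribution functions with ∫_{−∞}^0 F(y) dy < ∞ and ∫_{−∞}^0 G(y) dy < ∞, let α ∈ (0,1), and let λ ∈ [0,1]. Then CVaR_α(λF + (1−λ)G) ≤ λ·CVaR_α(F) + (1−λ)·CVaR_α(G); that is, the conditional value-at-risk is convex on the set of CDFs with integrable lower tail. -/

import Mathlib

open MeasureTheory

/-- A cumulative distribution function: nondecreasing, right-continuous,
tending to `0` at `−∞` and to `1` at `+∞`. -/
def IsCDF (F : ℝ → ℝ) : Prop :=
  Monotone F ∧ (∀ y : ℝ, ContinuousWithinAt F (Set.Ici y) y) ∧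
    Filter.Tendsto F Filter.atBot (nhds 0) ∧ Filter.Tendsto F Filter.atTop (nhds 1)

/-- Value-at-risk at level `α`: `VaR_α(F) = inf{ y : F y ≥ α }`. -/
noncomputable def VaR (α : ℝ) (F : ℝ → ℝ) : ℝ :=
  sInf {y : ℝ | α ≤ F y}

/-- Conditional value-at-risk at level `α`:
`CVaR_α(F) = VaR_α(F) − (1/α) ∫_{−∞}^{VaR_α(F)} F(y) dy`. -/
noncomputable def CVaR (α : ℝ) (F : ℝ → ℝ) : ℝ :=
  VaR α F - (1 / α) * ∫ y in Set.Iio (VaR α F), F y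

lemma cdf_nonneg {F : ℝ → ℝ} (hF : IsCDF F) (y : ℝ) : 0 ≤ F y := by
  refine le_of_tendsto hF.2.2.1 ?_
  filter_upwards [Filter.eventually_le_atBot y] with z hz using hF.1 hz

lemma cdf_le_one {F : ℝ → ℝ} (hF : IsCDF F) (y : ℝ) : F y ≤ 1 := by
  refine ge_of_tendsto hF.2.2.2 ?_
  filter_upwards [Filter.eventually_ge_atTop y] with z hz using hF.1 hz

lemma cdf_integrableOn_Iio {F : ℝ → ℝ} (hF : IsCDF F)
    (hInt : IntegrableOn F (Set.Iic (0 : ℝ))) (x : ℝ) :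
    IntegrableOn F (Set.Iio x) := by
  rcases le_or_gt x 0 with h | h
  · exact hInt.mono_set (Set.Iio_subset_Iic_self.trans (Set.Iic_subset_Iic.2 h))
  · have h2 : IntegrableOn F (Set.Ioc 0 x) := by
      refine Measure.integrableOn_of_bounded (M := 1) measure_Ioc_lt_top.ne
        hF.1.measurable.aestronglyMeasurable ?_
      filter_upwards with z
      rw [Real.norm_eq_abs, abs_le]
      exact ⟨by linarith [cdf_nonneg hF z], cdf_le_one hF z⟩
    refine (hInt.union h2).mono_set ?_
    intro z hz
    rcases le_or_gt z 0 with h' | h'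
    · exact Or.inl h'
    · exact Or.inr ⟨h', le_of_lt hz⟩

lemma var_nonempty {F : ℝ → ℝ} (hF : IsCDF F) {α : ℝ} (hα : α ∈ Set.Ioo (0:ℝ) 1) :
    {y : ℝ | α ≤ F y}.Nonempty := by
  have : ∀ᶠ y in Filter.atTop, α < F y :=
    hF.2.2.2.eventually (eventually_gt_nhds hα.2)
  obtain ⟨y, hy⟩ := this.exists
  exact ⟨y, le_of_lt hy⟩

lemma var_bddBelow {F : ℝ → ℝ} (hF : IsCDF F) {α : ℝ} (hα : α ∈ Set.Ioo (0:ℝ) 1) :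
    BddBelow {y : ℝ | α ≤ F y} := by
  have : ∀ᶠ y in Filter.atBot, F y < α :=
    hF.2.2.1.eventually (eventually_lt_nhds hα.1)
  obtain ⟨b, hb⟩ := Filter.eventually_atBot.1 this
  exact ⟨b, fun z hz => le_of_not_gt fun h => absurd hz (not_le.2 (hb z h.le))⟩

lemma cdf_lt_of_lt_VaR {F : ℝ → ℝ} (hF : IsCDF F) {α : ℝ} (hα : α ∈ Set.Ioo (0:ℝ) 1)
    {y : ℝ} (hy : y < VaR α F) : F y < α := by
  by_contra h
  exact absurd (csInf_le (var_bddBelow hF hα) (not_lt.1 h)) (not_le.2 hy)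

lemma alpha_le_cdf_VaR {F : ℝ → ℝ} (hF : IsCDF F) {α : ℝ} (hα : α ∈ Set.Ioo (0:ℝ) 1) :
    α ≤ F (VaR α F) := by
  have hgt : ∀ z ∈ Set.Ioi (VaR α F), α ≤ F z := by
    intro z hz
    obtain ⟨w, hw, hwz⟩ := exists_lt_of_csInf_lt (var_nonempty hF hα) hz
    exact hw.trans (hF.1 hwz.le)
  have ht : Filter.Tendsto F (nhdsWithin (VaR α F) (Set.Ioi (VaR α F))) (nhds (F (VaR α F))) :=
    ((hF.2.1 (VaR α F)).mono Set.Ioi_subset_Ici_self)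
  exact ge_of_tendsto ht (eventually_mem_nhdsWithin.mono hgt)

lemma alpha_le_cdf_of_VaR_le {F : ℝ → ℝ} (hF : IsCDF F) {α : ℝ} (hα : α ∈ Set.Ioo (0:ℝ) 1)
    {y : ℝ} (hy : VaR α F ≤ y) : α ≤ F y :=
  (alpha_le_cdf_VaR hF hα).trans (hF.1 hy)

lemma le_CVaR {F : ℝ → ℝ} (hF : IsCDF F) (hInt : IntegrableOn F (Set.Iic (0 : ℝ)))
    {α : ℝ} (hα : α ∈ Set.Ioo (0:ℝ) 1) (x : ℝ) :
    x - (1 / α) * ∫ y in Set.Iio x, F y ≤ CVaR α F := by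
  set v := VaR α F with hv
  have hα0 := hα.1
  rcases le_total x v with h | h
  · have hsplit : (∫ y in Set.Iio v, F y)
        = (∫ y in Set.Iio x, F y) + ∫ y in Set.Ico x v, F y := by
      rw [← setIntegral_union]
      · rw [Set.Iio_union_Ico_eq_Iio h]
      · exact (Set.Iio_disjoint_Ici le_rfl).mono_right Set.Ico_subset_Ici_self
      · exact measurableSet_Ico
      · exact cdf_integrableOn_Iio hF hInt x
      · exact (cdf_integrableOn_Iio hF hInt v).mono_set Set.Ico_subset_Iio_self
    have hbound : (∫ y in Set.Ico x v, F y) ≤ α * (v - x) := by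
      calc (∫ y in Set.Ico x v, F y) ≤ ∫ _ in Set.Ico x v, α := by
            refine setIntegral_mono_on
              ((cdf_integrableOn_Iio hF hInt v).mono_set Set.Ico_subset_Iio_self)
              (integrableOn_const measure_Ico_lt_top.ne) measurableSet_Ico ?_
            intro z hz
            exact (cdf_lt_of_lt_VaR hF hα hz.2).le
        _ = α * (v - x) := by
            rw [setIntegral_const, measureReal_def, Real.volume_Ico, smul_eq_mul,
              ENNReal.toReal_ofReal (by linarith), mul_comm]
    have : (1 / α) * ∫ y in Set.Ico x v, F y ≤ v - x := by
      rw [div_mul_eq_mul_div, one_mul, div_le_iff₀ hα0] at *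
      nlinarith
    rw [CVaR, ← hv, hsplit]
    ring_nf
    ring_nf at this
    linarith
  · have hsplit : (∫ y in Set.Iio x, F y)
        = (∫ y in Set.Iio v, F y) + ∫ y in Set.Ico v x, F y := by
      rw [← setIntegral_union]
      · rw [Set.Iio_union_Ico_eq_Iio h]
      · exact (Set.Iio_disjoint_Ici le_rfl).mono_right Set.Ico_subset_Ici_self
      · exact measurableSet_Ico
      · exact cdf_integrableOn_Iio hF hInt v
      · exact (cdf_integrableOn_Iio hF hInt x).mono_set Set.Ico_subset_Iio_self
    have hbound : α * (x - v) ≤ (∫ y in Set.Ico v x, F y) := by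
      calc α * (x - v) = ∫ _ in Set.Ico v x, α := by
            rw [setIntegral_const, measureReal_def, Real.volume_Ico, smul_eq_mul,
              ENNReal.toReal_ofReal (by linarith), mul_comm]
        _ ≤ ∫ y in Set.Ico v x, F y := by
            refine setIntegral_mono_on (integrableOn_const measure_Ico_lt_top.ne)
              ((cdf_integrableOn_Iio hF hInt x).mono_set Set.Ico_subset_Iio_self)
              measurableSet_Ico ?_
            intro z hz
            exact alpha_le_cdf_of_VaR_le hF hα hz.1
    have : x - v ≤ (1 / α) * ∫ y in Set.Ico v x, F y := by
      rw [div_mul_eq_mul_div, one_mul, le_div_iff₀ hα0]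
      nlinarith
    rw [CVaR, ← hv, hsplit]
    ring_nf
    ring_nf at this
    linarith

/-- Convexity of CVaR on the set of CDFs with integrable lower tail:
`CVaR_α(λF + (1−λ)G) ≤ λ CVaR_α(F) + (1−λ) CVaR_α(G)`. -/
theorem CVaR_convex (F G : ℝ → ℝ) (hF : IsCDF F) (hG : IsCDF G)
    (hIntF : IntegrableOn F (Set.Iic (0 : ℝ)))
    (hIntG : IntegrableOn G (Set.Iic (0 : ℝ)))
    (α : ℝ) (hα : α ∈ Set.Ioo (0 : ℝ) 1)
    (lam : ℝ) (hlam : lam ∈ Set.Icc (0 : ℝ) 1) :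
    CVaR α (fun y => lam * F y + (1 - lam) * G y) ≤
      lam * CVaR α F + (1 - lam) * CVaR α G := by
  set H : ℝ → ℝ := fun y => lam * F y + (1 - lam) * G y with hH
  set x := VaR α H with hx
  have hlam0 : (0:ℝ) ≤ lam := hlam.1
  have hlam1 : (0:ℝ) ≤ 1 - lam := by linarith [hlam.2]
  have hIF := cdf_integrableOn_Iio hF hIntF x
  have hIG := cdf_integrableOn_Iio hG hIntG x
  have hsplit : (∫ y in Set.Iio x, H y)
      = lam * (∫ y in Set.Iio x, F y) + (1 - lam) * ∫ y in Set.Iio x, G y := by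
    rw [hH]
    rw [integral_add (hIF.const_mul lam) (hIG.const_mul (1 - lam)),
      integral_const_mul, integral_const_mul]
  have h1 : x - (1 / α) * ∫ y in Set.Iio x, F y ≤ CVaR α F :=
    le_CVaR hF hIntF hα x
  have h2 : x - (1 / α) * ∫ y in Set.Iio x, G y ≤ CVaR α G :=
    le_CVaR hG hIntG hα x
  have : CVaR α H = lam * (x - (1 / α) * ∫ y in Set.Iio x, F y)
      + (1 - lam) * (x - (1 / α) * ∫ y in Set.Iio x, G y) := by
    rw [CVaR, ← hx, hsplit]; ring
  rw [this]
  exact add_le_add (mul_le_mul_of_nonneg_left h1 hlam0)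
    (mul_le_mul_of_nonneg_left h2 hlam1)
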